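/- With ω± as above, for all (x,y) in R_a \ {(2,0)} (0 < a ≤ 1/10) the partial derivatives satisfy 0 ≤ ∂ω±/∂x < 1, with equality ∂ω₊/∂x = 0 exactly when y = 0 and x < 2 (and ∂ω₋/∂x = 0 exactly when y = 0 and x > 2). -/

import Mathlib

noncomputable def Delta (x y : ℝ) : ℝ := ((x+2)^2 + 8*x^2*y^2) * ((x-2)^2 + 8*x^2*y^2)
noncomputable def r1sq (x y : ℝ) : ℝ := 4 + x^2 + 4*x^2*y^2

noncomputable def omegaP (x y : ℝ) : ℝ := (-4 + x^2 + Real.sqrt (Delta x y)) / (2 * r1sq x y)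
noncomputable def omegaM (x y : ℝ) : ℝ := (-4 + x^2 - Real.sqrt (Delta x y)) / (2 * r1sq x y)

lemma r1sq_pos (x y : ℝ) : 0 < r1sq x y := by unfold r1sq; positivity

lemma deriv_formula (y σ x : ℝ) (hΔ : 0 < Delta x y) :
    deriv (fun t => (-4 + t^2 + σ * Real.sqrt (Delta t y)) / (2 * r1sq t y)) x
      = 32*x*((1+2*y^2)*Real.sqrt (Delta x y)
          + σ*(-4+x^2+8*y^2+6*x^2*y^2+16*x^2*y^4))
        / (4 * Real.sqrt (Delta x y) * (r1sq x y)^2) := by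
  set s := Real.sqrt (Delta x y) with hsdef
  have hs0 : 0 < s := Real.sqrt_pos.mpr hΔ
  have hs2 : s^2 = Delta x y := Real.sq_sqrt hΔ.le
  have hr : 0 < r1sq x y := r1sq_pos x y
  have hd1 : HasDerivAt (fun t : ℝ => Delta t y)
      (4*x*(x^2-4) + 64*x*y^2*(x^2+2) + 256*x^3*y^4) x := by
    have h1 : HasDerivAt (fun t : ℝ => (t+2)^2 + 8*t^2*y^2) (2*(x+2)+16*x*y^2) x := by
      have ha' := ((hasDerivAt_id x).add_const (2:ℝ)).pow 2
      have hb' := (((hasDerivAt_id x).pow 2).const_mul (8:ℝ)).mul_const (y^2)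
      convert ha'.add hb' using 1
      iterate 3 rfl
      simp only [id_eq]; push_cast; ring
    have h2 : HasDerivAt (fun t : ℝ => (t-2)^2 + 8*t^2*y^2) (2*(x-2)+16*x*y^2) x := by
      have ha' := ((hasDerivAt_id x).sub_const (2:ℝ)).pow 2
      have hb' := (((hasDerivAt_id x).pow 2).const_mul (8:ℝ)).mul_const (y^2)
      convert ha'.add hb' using 1
      iterate 3 rfl
      simp only [id_eq]; push_cast; ring
    have := h1.mul h2
    simp only [Delta]
    convert this using 1
    iterate 3 rfl
    ring
  have hds : HasDerivAt (fun t => Real.sqrt (Delta t y))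
      ((4*x*(x^2-4) + 64*x*y^2*(x^2+2) + 256*x^3*y^4) / (2*s)) x := by
    have := (Real.hasDerivAt_sqrt (ne_of_gt hΔ)).comp x hd1
    convert this using 1
    iterate 3 rfl
    rw [← hsdef]; ring
  have hnum : HasDerivAt (fun t : ℝ => -4 + t^2 + σ * Real.sqrt (Delta t y))
      (2*x + σ * ((4*x*(x^2-4) + 64*x*y^2*(x^2+2) + 256*x^3*y^4) / (2*s))) x := by
    have h1 := ((hasDerivAt_id x).pow 2).const_add (-4 : ℝ)
    have := h1.add (hds.const_mul σ)
    convert this using 1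
    iterate 3 rfl
    simp only [id_eq]; push_cast; ring
  have hden : HasDerivAt (fun t : ℝ => 2 * r1sq t y) (2*(2*x + 8*x*y^2)) x := by
    have h1 : HasDerivAt (fun t : ℝ => r1sq t y) (2*x + 8*x*y^2) x := by
      simp only [r1sq]
      have ha' := ((hasDerivAt_id x).pow 2).const_add (4:ℝ)
      have hb' := (((hasDerivAt_id x).pow 2).const_mul (4:ℝ)).mul_const (y^2)
      convert ha'.add hb' using 1
      iterate 3 rfl
      simp only [id_eq]; push_cast; ring
    exact h1.const_mul 2
  have hden_ne : 2 * r1sq x y ≠ 0 := by positivity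
  have hω := hnum.div hden hden_ne
  have hre : r1sq x y = 4 + x^2 + 4*x^2*y^2 := rfl
  have hs2' : s^2 = ((x+2)^2 + 8*x^2*y^2) * ((x-2)^2 + 8*x^2*y^2) := by
    rw [hs2]; rfl
  rw [(show HasDerivAt (fun t => (-4 + t^2 + σ * Real.sqrt (Delta t y)) / (2 * r1sq t y)) _ x from hω).deriv, hre]
  have hpos2 : (0:ℝ) < 4 * s * (4 + x^2 + 4*x^2*y^2)^2 :=
    mul_pos (mul_pos (by norm_num) hs0) (by positivity)
  rw [div_eq_div_iff (by positivity) (ne_of_gt hpos2)]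
  field_simp
  ring_nf
  linear_combination (16*x*σ*(1+4*y^2)*s) * hsdef + (-(16*x*σ*(1+4*y^2))) * hs2'

set_option maxHeartbeats 2000000 in
theorem stmt_11 (a : ℝ) (ha0 : 0 < a) (ha : a ≤ 1/10) (x y : ℝ)
    (hx : 2 - a ≤ x ∧ x ≤ 2 + a) (hy : |y| ≤ a/10) (hp : (x, y) ≠ (2, 0)) :
    (0 ≤ deriv (fun t => omegaP t y) x ∧ deriv (fun t => omegaP t y) x < 1) ∧
    (0 ≤ deriv (fun t => omegaM t y) x ∧ deriv (fun t => omegaM t y) x < 1) ∧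
    (deriv (fun t => omegaP t y) x = 0 ↔ y = 0 ∧ x < 2) ∧
    (deriv (fun t => omegaM t y) x = 0 ↔ y = 0 ∧ 2 < x) := by
  obtain ⟨hx1, hx2⟩ := hx
  have hxl : (19:ℝ)/10 ≤ x := by linarith
  have hxu : x ≤ 21/10 := by linarith
  have hyab := abs_le.mp hy
  have hy2 : y^2 ≤ 1/10000 := by nlinarith [hyab.1, hyab.2]
  have hne : ¬(x = 2 ∧ y = 0) := by
    rintro ⟨h1, h2⟩; exact hp (by simp [h1, h2])
  have hr : 0 < r1sq x y := r1sq_pos x y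
  have hre : r1sq x y = 4 + x^2 + 4*x^2*y^2 := rfl
  have hΔ : 0 < Delta x y := by
    have h1 : (0:ℝ) < (x+2)^2 + 8*x^2*y^2 := by nlinarith [sq_nonneg (x*y)]
    have h2 : (0:ℝ) < (x-2)^2 + 8*x^2*y^2 := by
      rcases eq_or_ne y 0 with hy0 | hy0
      · have hx2' : x ≠ 2 := fun h => hne ⟨h, hy0⟩
        have hsub : x - 2 ≠ 0 := sub_ne_zero.mpr hx2'
        have h3 : 0 < (x-2)^2 := lt_of_le_of_ne (sq_nonneg _) (Ne.symm (pow_ne_zero 2 hsub))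
        nlinarith [sq_nonneg (x*y)]
      · have hyp : 0 < y^2 := by rcases hy0.lt_or_gt with h|h <;> nlinarith
        nlinarith [sq_nonneg (x-2)]
    exact mul_pos h1 h2
  obtain ⟨s, hsdef⟩ : ∃ s, s = Real.sqrt (Delta x y) := ⟨_, rfl⟩
  have hs0 : 0 < s := hsdef ▸ Real.sqrt_pos.mpr hΔ
  have hs2 : s^2 = Delta x y := by rw [hsdef]; exact Real.sq_sqrt hΔ.le
  obtain ⟨C, hCdef⟩ : ∃ C : ℝ, C = -4+x^2+8*y^2+6*x^2*y^2+16*x^2*y^4 := ⟨_, rfl⟩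
  have hs2' : s^2 = ((x+2)^2 + 8*x^2*y^2) * ((x-2)^2 + 8*x^2*y^2) := by rw [hs2]; rfl
  have hkey : ((1+2*y^2)*s)^2 - C^2 = 8*y^2*(r1sq x y)^2 := by
    rw [hre, hCdef]
    linear_combination (1+2*y^2)^2 * hs2'
  have hupos : 0 < (1+2*y^2)*s := mul_pos (by nlinarith) hs0
  have hCsq : C^2 ≤ ((1+2*y^2)*s)^2 := by
    nlinarith [hkey, mul_nonneg (sq_nonneg y) (sq_nonneg (r1sq x y))]
  have hC1 : C ≤ (1+2*y^2)*s := by nlinarith [hCsq, hupos, sq_nonneg (C - (1+2*y^2)*s)]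
  have hC2 : -((1+2*y^2)*s) ≤ C := by nlinarith [hCsq, hupos, sq_nonneg (C + (1+2*y^2)*s)]
  have hdenpos : (0:ℝ) < 4*s*(r1sq x y)^2 :=
    mul_pos (mul_pos (by norm_num) hs0) (pow_pos hr 2)
  have hdP : deriv (fun t => omegaP t y) x
      = 32*x*((1+2*y^2)*s + C) / (4*s*(r1sq x y)^2) := by
    have hfun : (fun t => omegaP t y)
        = (fun t => (-4 + t^2 + (1:ℝ) * Real.sqrt (Delta t y)) / (2 * r1sq t y)) := by
      funext t; simp [omegaP]
    rw [hfun, deriv_formula y 1 x hΔ, ← hsdef, hCdef]; ring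
  have hdM : deriv (fun t => omegaM t y) x
      = 32*x*((1+2*y^2)*s - C) / (4*s*(r1sq x y)^2) := by
    have hfun : (fun t => omegaM t y)
        = (fun t => (-4 + t^2 + (-1:ℝ) * Real.sqrt (Delta t y)) / (2 * r1sq t y)) := by
      funext t; simp [omegaM]; ring
    rw [hfun, deriv_formula y (-1) x hΔ, ← hsdef, hCdef]; ring
  have hr2 : 16*x*(1+2*y^2) < (r1sq x y)^2 := by
    rw [hre]; nlinarith [sq_nonneg y, sq_nonneg (x*y), sq_nonneg (x*y^2)]
  refine ⟨⟨?_, ?_⟩, ⟨?_, ?_⟩, ?_, ?_⟩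
  · rw [hdP]
    apply div_nonneg _ hdenpos.le
    have : 0 ≤ (1+2*y^2)*s + C := by linarith
    nlinarith [this]
  · rw [hdP, div_lt_one hdenpos]
    nlinarith [mul_le_mul_of_nonneg_left hC1 (by linarith : (0:ℝ) ≤ 32*x),
      mul_lt_mul_of_pos_left hr2 (by linarith : (0:ℝ) < 4*s)]
  · rw [hdM]
    apply div_nonneg _ hdenpos.le
    have : 0 ≤ (1+2*y^2)*s - C := by linarith
    nlinarith [this]
  · rw [hdM, div_lt_one hdenpos]
    nlinarith [mul_le_mul_of_nonneg_left hC2 (by linarith : (0:ℝ) ≤ 32*x),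
      mul_lt_mul_of_pos_left hr2 (by linarith : (0:ℝ) < 4*s)]
  · rw [hdP, div_eq_zero_iff]
    constructor
    · rintro (h | h)
      · have h0 : (1+2*y^2)*s + C = 0 := by
          rcases mul_eq_zero.mp h with h' | h'
          · exfalso; linarith
          · exact h'
        have hy0 : y = 0 := by
          have hsq : y^2 = 0 := by nlinarith [hkey, mul_pos hr hr, h0]
          exact pow_eq_zero_iff two_ne_zero |>.mp hsq
        have hC0 : C = x^2 - 4 := by rw [hCdef, hy0]; ring
        refine ⟨hy0, ?_⟩
        rw [hy0] at h0
        nlinarith [hs0, h0, hC0, hxl]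
      · exact absurd h (ne_of_gt hdenpos)
    · rintro ⟨hy0, hxlt⟩
      left
      have hsval : s = 4 - x^2 := by
        rw [hsdef, hy0]
        have hD0 : Delta x 0 = (4 - x^2)^2 := by unfold Delta; ring
        rw [hD0, Real.sqrt_sq_eq_abs, abs_of_nonneg (by nlinarith : (0:ℝ) ≤ 4 - x^2)]
      have h0 : (1+2*y^2)*s + C = 0 := by rw [hCdef, hy0, hsval]; ring
      rw [h0]; ring
  · rw [hdM, div_eq_zero_iff]
    constructor
    · rintro (h | h)
      · have h0 : (1+2*y^2)*s - C = 0 := by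
          rcases mul_eq_zero.mp h with h' | h'
          · exfalso; linarith
          · exact h'
        have hy0 : y = 0 := by
          have hsq : y^2 = 0 := by nlinarith [hkey, mul_pos hr hr, h0]
          exact pow_eq_zero_iff two_ne_zero |>.mp hsq
        have hC0 : C = x^2 - 4 := by rw [hCdef, hy0]; ring
        refine ⟨hy0, ?_⟩
        rw [hy0] at h0
        nlinarith [hs0, h0, hC0, hxl]
      · exact absurd h (ne_of_gt hdenpos)
    · rintro ⟨hy0, hxlt⟩
      left
      have hsval : s = x^2 - 4 := by
        rw [hsdef, hy0]
        have hD0 : Delta x 0 = (x^2 - 4)^2 := by unfold Delta; ring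
        rw [hD0, Real.sqrt_sq_eq_abs, abs_of_nonneg (by nlinarith : (0:ℝ) ≤ x^2 - 4)]
      have h0 : (1+2*y^2)*s - C = 0 := by rw [hCdef, hy0, hsval]; ring
      rw [h0]; ring
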